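/- In the canonical model of Λ, ⊙_S[α]φ ∈ w if and only if K_αφ ∈ v for every v ∈ α_k[w] with Γ_α^v ⊆ v, where α_k[w] = {v : K_α□ψ ∈ w ⇒ ψ ∈ v} and Γ_α^v = {K_αφ : ⊙_S[α]φ ∈ v}. -/
import Mathlib


/-- Formulas of the language `L_KO`, with operators `□`, `[α]`, `K_α`,
`⊙[α]` (objective ought) and `⊙_S[α]` (subjective ought). -/
inductive Form (Ags : Type) : Type
  | atom : Nat → Form Ags
  | bot  : Form Ags
  | imp  : Form Ags → Form Ags → Form Ags
  | box  : Form Ags → Form Ags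
  | act  : Ags → Form Ags → Form Ags
  | know : Ags → Form Ags → Form Ags
  | obj  : Ags → Form Ags → Form Ags
  | subj : Ags → Form Ags → Form Ags

namespace Form

variable {Ags : Type}

def neg (φ : Form Ags) : Form Ags := imp φ bot
def dia (φ : Form Ags) : Form Ags := neg (box (neg φ))
def conj (φ ψ : Form Ags) : Form Ags := neg (imp φ (neg ψ))
def disj (φ ψ : Form Ags) : Form Ags := imp (neg φ) ψ
def conjl : List (Form Ags) → Form Ags
  | [] => neg bot
  | φ :: l => conj φ (conjl l)

end Form

open Form

/-- The Hilbert-style proof system `Λ`. -/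
inductive Prov {Ags : Type} : Form Ags → Prop
  | pl1 (φ ψ : Form Ags) : Prov (imp φ (imp ψ φ))
  | pl2 (φ ψ χ : Form Ags) :
      Prov (imp (imp φ (imp ψ χ)) (imp (imp φ ψ) (imp φ χ)))
  | pl3 (φ ψ : Form Ags) : Prov (imp (imp (neg φ) (neg ψ)) (imp ψ φ))
  | mp {φ ψ : Form Ags} : Prov (imp φ ψ) → Prov φ → Prov ψ
  -- S5 axioms and necessitation for □
  | boxK (φ ψ : Form Ags) : Prov (imp (box (imp φ ψ)) (imp (box φ) (box ψ)))
  | boxT (φ : Form Ags) : Prov (imp (box φ) φ)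
  | box4 (φ : Form Ags) : Prov (imp (box φ) (box (box φ)))
  | box5 (φ : Form Ags) : Prov (imp (dia φ) (box (dia φ)))
  | boxNec {φ : Form Ags} : Prov φ → Prov (box φ)
  -- S5 axioms and necessitation for [α]
  | actK (a : Ags) (φ ψ : Form Ags) :
      Prov (imp (act a (imp φ ψ)) (imp (act a φ) (act a ψ)))
  | actT (a : Ags) (φ : Form Ags) : Prov (imp (act a φ) φ)
  | act4 (a : Ags) (φ : Form Ags) : Prov (imp (act a φ) (act a (act a φ)))
  | act5 (a : Ags) (φ : Form Ags) :
      Prov (imp (neg (act a φ)) (act a (neg (act a φ))))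
  | actNec {φ : Form Ags} (a : Ags) : Prov φ → Prov (act a φ)
  -- S5 axioms and necessitation for K_α
  | knowK (a : Ags) (φ ψ : Form Ags) :
      Prov (imp (know a (imp φ ψ)) (imp (know a φ) (know a ψ)))
  | knowT (a : Ags) (φ : Form Ags) : Prov (imp (know a φ) φ)
  | know4 (a : Ags) (φ : Form Ags) : Prov (imp (know a φ) (know a (know a φ)))
  | know5 (a : Ags) (φ : Form Ags) :
      Prov (imp (neg (know a φ)) (know a (neg (know a φ))))
  | knowNec {φ : Form Ags} (a : Ags) : Prov φ → Prov (know a φ)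
  -- deontic-epistemic axioms
  | a1 (a : Ags) (φ ψ : Form Ags) :
      Prov (imp (obj a (imp φ ψ)) (imp (obj a φ) (obj a ψ)))
  | a2 (a : Ags) (φ : Form Ags) :
      Prov (imp (box φ) (conj (act a φ) (obj a φ)))
  | a3 (a : Ags) (φ : Form Ags) :
      Prov (disj (box (obj a φ)) (box (neg (obj a φ))))
  | a4 (a : Ags) (φ : Form Ags) : Prov (imp (obj a φ) (obj a (act a φ)))
  | oic (a : Ags) (φ : Form Ags) : Prov (imp (obj a φ) (dia (act a φ)))
  | ia (l : List (Ags × Form Ags)) (h : l.Pairwise fun p q => p.1 ≠ q.1) :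
      Prov (imp (conjl (l.map fun p => dia (act p.1 p.2)))
                (dia (conjl (l.map fun p => act p.1 p.2))))
  | a5 (a : Ags) (φ ψ : Form Ags) :
      Prov (imp (subj a (imp φ ψ)) (imp (subj a φ) (subj a ψ)))
  | a6 (a : Ags) (φ : Form Ags) : Prov (imp (subj a φ) (subj a (know a φ)))
  | oacAx (a : Ags) (φ : Form Ags) : Prov (imp (know a φ) (act a φ))
  | unifH (a : Ags) (φ : Form Ags) :
      Prov (imp (dia (know a φ)) (know a (dia φ)))
  | sN (a : Ags) (φ : Form Ags) : Prov (imp (know a (box φ)) (subj a φ))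
  | sOic (a : Ags) (φ : Form Ags) : Prov (imp (subj a φ) (dia (know a φ)))
  | clAx (a : Ags) (φ : Form Ags) :
      Prov (imp (subj a φ) (know a (box (subj a φ))))
  | objNec {φ : Form Ags} (a : Ags) : Prov φ → Prov (obj a φ)
  | subjNec {φ : Form Ags} (a : Ags) : Prov φ → Prov (subj a φ)

/-- `Λ`-consistency of a set of formulas. -/
def Consistent {Ags : Type} (Γ : Set (Form Ags)) : Prop :=
  ¬ ∃ l : List (Form Ags), (∀ φ ∈ l, φ ∈ Γ) ∧ Prov (imp (conjl l) bot)

/-- Maximal `Λ`-consistent set. -/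
def MCS {Ags : Type} (w : Set (Form Ags)) : Prop :=
  Consistent w ∧ ∀ φ : Form Ags, φ ∈ w ∨ neg φ ∈ w

/-- Canonical relation for `□`. -/
def RboxC {Ags : Type} (w v : Set (Form Ags)) : Prop :=
  ∀ φ : Form Ags, box φ ∈ w → φ ∈ v

/-- Canonical relation for `[α]`. -/
def RactC {Ags : Type} (a : Ags) (w v : Set (Form Ags)) : Prop :=
  ∀ φ : Form Ags, act a φ ∈ w → φ ∈ v

/-- Canonical relation for `K_α`. -/
def RknowC {Ags : Type} (a : Ags) (w v : Set (Form Ags)) : Prop :=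
  ∀ φ : Form Ags, know a φ ∈ w → φ ∈ v

/-- `Σ_α^w = {[α]φ : ⊙[α]φ ∈ w}`. -/
def SigmaSet {Ags : Type} (a : Ags) (w : Set (Form Ags)) : Set (Form Ags) :=
  {ψ | ∃ φ, ψ = act a φ ∧ obj a φ ∈ w}

/-- `Γ_α^w = {K_αφ : ⊙_S[α]φ ∈ w}`. -/
def GammaSet {Ags : Type} (a : Ags) (w : Set (Form Ags)) : Set (Form Ags) :=
  {ψ | ∃ φ, ψ = know a φ ∧ subj a φ ∈ w}

/-- `v ∈ α_k[w]`: the canonical relation of the composite operator `K_α□`. -/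
def alphak {Ags : Type} (a : Ags) (w v : Set (Form Ags)) : Prop :=
  ∀ φ : Form Ags, know a (box φ) ∈ w → φ ∈ v

namespace Form14
open Form

variable {Ags : Type}

/-- Derivations from a finite list of hypotheses. -/
inductive Ded : List (Form Ags) → Form Ags → Prop
  | hyp {Γ : List (Form Ags)} {φ : Form Ags} : φ ∈ Γ → Ded Γ φ
  | prov {Γ : List (Form Ags)} {φ : Form Ags} : Prov φ → Ded Γ φ
  | mp {Γ : List (Form Ags)} {φ ψ : Form Ags} :
      Ded Γ (imp φ ψ) → Ded Γ φ → Ded Γ ψ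

theorem provId (φ : Form Ags) : Prov (imp φ φ) :=
  Prov.mp (Prov.mp (Prov.pl2 φ (imp φ φ) φ) (Prov.pl1 φ (imp φ φ))) (Prov.pl1 φ φ)

theorem Ded.weak {Γ Γ' : List (Form Ags)} {φ : Form Ags}
    (hsub : ∀ ψ ∈ Γ, ψ ∈ Γ') (h : Ded Γ φ) : Ded Γ' φ := by
  induction h with
  | hyp h => exact .hyp (hsub _ h)
  | prov h => exact .prov h
  | mp _ _ ih1 ih2 => exact .mp ih1 ih2

private theorem ded_imp_intro_aux {Δ : List (Form Ags)} {ψ : Form Ags} (h : Ded Δ ψ) :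
    ∀ {Γ : List (Form Ags)} {φ : Form Ags}, Δ = φ :: Γ → Ded Γ (imp φ ψ) := by
  induction h with
  | hyp hm =>
    intro Γ φ hΔ
    subst hΔ
    rcases List.mem_cons.mp hm with h | h
    · subst h; exact .prov (provId _)
    · exact .mp (.prov (Prov.pl1 _ _)) (.hyp h)
  | prov hp =>
    intro Γ φ _
    exact .mp (.prov (Prov.pl1 _ _)) (.prov hp)
  | mp _ _ ih1 ih2 =>
    intro Γ φ hΔ
    exact .mp (.mp (.prov (Prov.pl2 _ _ _)) (ih1 hΔ)) (ih2 hΔ)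

theorem Ded.imp_intro {Γ : List (Form Ags)} {φ ψ : Form Ags}
    (h : Ded (φ :: Γ) ψ) : Ded Γ (imp φ ψ) :=
  ded_imp_intro_aux h rfl

private theorem prov_of_ded_nil_aux {Δ : List (Form Ags)} {φ : Form Ags} (h : Ded Δ φ) :
    Δ = [] → Prov φ := by
  induction h with
  | hyp hm => intro hΔ; subst hΔ; simp at hm
  | prov hp => intro _; exact hp
  | mp _ _ ih1 ih2 => intro hΔ; exact Prov.mp (ih1 hΔ) (ih2 hΔ)

theorem prov_of_ded_nil {φ : Form Ags} (h : Ded [] φ) : Prov φ :=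
  prov_of_ded_nil_aux h rfl

theorem prov_imp {φ ψ : Form Ags} (h : Ded [φ] ψ) : Prov (imp φ ψ) :=
  prov_of_ded_nil h.imp_intro

theorem provDNI (φ : Form Ags) : Prov (imp φ (neg (neg φ))) :=
  prov_of_ded_nil <| .imp_intro <| .imp_intro <|
    .mp (.hyp (φ := neg φ) (by simp)) (.hyp (φ := φ) (by simp))

theorem provDNE (φ : Form Ags) : Prov (imp (neg (neg φ)) φ) :=
  Prov.mp (Prov.pl3 φ (neg (neg φ))) (provDNI (neg φ))

theorem ded_byContra {Γ : List (Form Ags)} {φ : Form Ags}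
    (h : Ded (neg φ :: Γ) bot) : Ded Γ φ :=
  .mp (.prov (provDNE φ)) h.imp_intro

theorem imp_trans {p q r : Form Ags} (h1 : Prov (imp p q)) (h2 : Prov (imp q r)) :
    Prov (imp p r) :=
  prov_imp (.mp (.prov h2) (.mp (.prov h1) (.hyp (by simp [Form.neg, Form.conj, Form.conjl]))))

theorem contrapose {p q : Form Ags} (h : Prov (imp p q)) :
    Prov (imp (neg q) (neg p)) :=
  prov_imp <| .imp_intro <|
    .mp (.hyp (by simp [Form.neg, Form.conj, Form.conjl])) (.mp (.prov h) (.hyp (by simp [Form.neg, Form.conj, Form.conjl])))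

theorem exFalso (φ : Form Ags) : Prov (imp bot φ) :=
  Prov.mp (Prov.pl3 φ bot)
    (Prov.mp (Prov.pl1 (neg bot) (neg φ)) (provId bot))

theorem ded_conj_intro {Γ : List (Form Ags)} {p q : Form Ags}
    (hp : Ded Γ p) (hq : Ded Γ q) : Ded Γ (conj p q) :=
  Ded.imp_intro <|
    .mp (.mp (.hyp (by simp [Form.neg, Form.conj, Form.conjl])) (hp.weak (fun ψ h => List.mem_cons_of_mem _ h)))
      (hq.weak (fun ψ h => List.mem_cons_of_mem _ h))

theorem ded_conj_left {Γ : List (Form Ags)} {p q : Form Ags}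
    (h : Ded Γ (conj p q)) : Ded Γ p :=
  ded_byContra <|
    .mp (h.weak (fun ψ h => List.mem_cons_of_mem _ h))
      (Ded.imp_intro <|
        .mp (.prov (exFalso (neg q)))
          (.mp (.hyp (φ := neg p) (by simp)) (.hyp (φ := p) (by simp))))

theorem ded_conj_right {Γ : List (Form Ags)} {p q : Form Ags}
    (h : Ded Γ (conj p q)) : Ded Γ q :=
  ded_byContra <|
    .mp (h.weak (fun ψ h => List.mem_cons_of_mem _ h))
      (.mp (.prov (Prov.pl1 (neg q) p)) (.hyp (by simp [Form.neg, Form.conj, Form.conjl])))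

theorem ded_conjl_intro {Γ : List (Form Ags)} :
    ∀ {l : List (Form Ags)}, (∀ ψ ∈ l, Ded Γ ψ) → Ded Γ (conjl l)
  | [], _ => .prov (provId bot)
  | φ :: t, h =>
    ded_conj_intro (h φ (by simp [Form.neg, Form.conj, Form.conjl]))
      (ded_conjl_intro (fun ψ hψ => h ψ (List.mem_cons_of_mem _ hψ)))

theorem ded_conjl_elim {Γ : List (Form Ags)} :
    ∀ {l : List (Form Ags)}, Ded Γ (conjl l) → ∀ ψ ∈ l, Ded Γ ψ
  | φ :: t, h, ψ, hψ => by
    rcases List.mem_cons.mp hψ with h' | h'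
    · subst h'; exact ded_conj_left h
    · exact ded_conjl_elim (ded_conj_right h) ψ h'

/-! ### MCS lemmas -/

theorem mcs_prov {w : Set (Form Ags)} (hw : MCS w) {φ : Form Ags}
    (h : Prov φ) : φ ∈ w := by
  rcases hw.2 φ with h' | h'
  · exact h'
  · exfalso
    refine hw.1 ⟨[neg φ], by simpa using h', prov_imp ?_⟩
    have c : Ded [conjl [neg φ]] (conjl [neg φ]) :=
      .hyp (by simp)
    exact .mp (ded_conj_left c) (.prov h)

theorem mcs_not_both {w : Set (Form Ags)} (hw : MCS w) {φ : Form Ags}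
    (h1 : φ ∈ w) (h2 : neg φ ∈ w) : False := by
  refine hw.1 ⟨[φ, neg φ], ?_, ?_⟩
  · intro ψ hψ; rcases List.mem_cons.mp hψ with h | h
    · subst h; exact h1
    · simp at h; subst h; exact h2
  · refine prov_imp ?_
    have c : Ded [conjl [φ, neg φ]] (conjl [φ, neg φ]) := .hyp (by simp)
    exact .mp (ded_conj_left (ded_conj_right c)) (ded_conj_left c)

theorem mcs_closure {w : Set (Form Ags)} (hw : MCS w) {φ ψ : Form Ags}
    (h : Prov (imp φ ψ)) (hφ : φ ∈ w) : ψ ∈ w := by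
  rcases hw.2 ψ with h' | h'
  · exact h'
  · exfalso
    refine hw.1 ⟨[φ, neg ψ], ?_, ?_⟩
    · intro χ hχ; rcases List.mem_cons.mp hχ with hc | hc
      · subst hc; exact hφ
      · simp at hc; subst hc; exact h'
    · refine prov_imp ?_
      have c : Ded [conjl [φ, neg ψ]] (conjl [φ, neg ψ]) := .hyp (by simp [Form.neg, Form.conj, Form.conjl])
      exact .mp (ded_conj_left (ded_conj_right c))
        (.mp (.prov h) (ded_conj_left c))

theorem mcs_mp {w : Set (Form Ags)} (hw : MCS w) {φ ψ : Form Ags}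
    (h : imp φ ψ ∈ w) (hφ : φ ∈ w) : ψ ∈ w := by
  rcases hw.2 ψ with h' | h'
  · exact h'
  · exfalso
    refine hw.1 ⟨[imp φ ψ, φ, neg ψ], ?_, ?_⟩
    · intro χ hχ
      rcases List.mem_cons.mp hχ with hc | hc
      · subst hc; exact h
      rcases List.mem_cons.mp hc with hc | hc
      · subst hc; exact hφ
      · simp at hc; subst hc; exact h'
    · refine prov_imp ?_
      have c : Ded [conjl [imp φ ψ, φ, neg ψ]] (conjl [imp φ ψ, φ, neg ψ]) :=
        .hyp (by simp [Form.neg, Form.conj, Form.conjl])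
      exact .mp (ded_conj_left (ded_conj_right (ded_conj_right c)))
        (.mp (ded_conj_left c) (ded_conj_left (ded_conj_right c)))

theorem mcs_closure2 {w : Set (Form Ags)} (hw : MCS w) {p q r : Form Ags}
    (h : Prov (imp p (imp q r))) (hp : p ∈ w) (hq : q ∈ w) : r ∈ w :=
  mcs_mp hw (mcs_closure hw h hp) hq

/-! ### Modal lemmas -/

theorem box_mono {p q : Form Ags} (h : Prov (imp p q)) :
    Prov (imp (box p) (box q)) :=
  Prov.mp (Prov.boxK p q) (Prov.boxNec h)

theorem know_mono (a : Ags) {p q : Form Ags} (h : Prov (imp p q)) :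
    Prov (imp (know a p) (know a q)) :=
  Prov.mp (Prov.knowK a p q) (Prov.knowNec a h)

theorem subj_mono (a : Ags) {p q : Form Ags} (h : Prov (imp p q)) :
    Prov (imp (subj a p) (subj a q)) :=
  Prov.mp (Prov.a5 a p q) (Prov.subjNec a h)

theorem kbox_mono (a : Ags) {p q : Form Ags} (h : Prov (imp p q)) :
    Prov (imp (know a (box p)) (know a (box q))) :=
  know_mono a (box_mono h)

/-- 5 for `□` in the `¬□p → □¬□p` form. -/
theorem box5' (p : Form Ags) :
    Prov (imp (neg (box p)) (box (neg (box p)))) := by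
  have f : Prov (imp (neg (box p)) (neg (box (neg (neg p))))) :=
    contrapose (box_mono (provDNE p))
  have g : Prov (imp (box (neg (box (neg (neg p))))) (box (neg (box p)))) :=
    box_mono (contrapose (box_mono (provDNI p)))
  exact imp_trans f (imp_trans (Prov.box5 (neg p)) g)

/-- `◇□p → □p`. -/
theorem dia_box (p : Form Ags) : Prov (imp (dia (box p)) (box p)) :=
  imp_trans (contrapose (box5' p)) (provDNE (box p))

/-- 5 for the composite operator `K_α□`. -/
theorem comp5 (a : Ags) (p : Form Ags) :
    Prov (imp (neg (know a (box p)))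
      (know a (box (neg (know a (box p)))))) := by
  have c : Prov (imp (dia (know a (box p))) (know a (box p))) :=
    imp_trans (Prov.unifH a (box p)) (know_mono a (dia_box p))
  have b : Prov (imp (neg (know a (box p))) (box (neg (know a (box p))))) :=
    imp_trans (contrapose c) (provDNE (box (neg (know a (box p)))))
  exact imp_trans (Prov.know5 a (box p)) (know_mono a b)

/-- `¬⊙_S[α]φ → K_α□¬⊙_S[α]φ`. -/
theorem neg_subj_kbox (a : Ags) (φ : Form Ags) :
    Prov (imp (neg (subj a φ)) (know a (box (neg (subj a φ))))) := by
  have t1 : Prov (imp (know a (box (subj a φ))) (subj a φ)) :=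
    imp_trans (Prov.knowT a (box (subj a φ))) (Prov.boxT (subj a φ))
  have t2 := contrapose t1
  have t4 := contrapose (Prov.clAx a φ)
  have t5 := kbox_mono a t4
  exact imp_trans t2 (imp_trans (comp5 a (subj a φ)) t5)

theorem prov_conj_intro_imp (p q : Form Ags) :
    Prov (imp p (imp q (conj p q))) :=
  prov_of_ded_nil <| .imp_intro <| .imp_intro <|
    ded_conj_intro (.hyp (by simp [Form.neg, Form.conj, Form.conjl])) (.hyp (by simp [Form.neg, Form.conj, Form.conjl]))

theorem mcs_subj_conjl {w : Set (Form Ags)} (hw : MCS w) (a : Ags) :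
    ∀ {l : List (Form Ags)}, (∀ ψ ∈ l, subj a ψ ∈ w) → subj a (conjl l) ∈ w
  | [], _ => mcs_prov hw (Prov.subjNec a (provId bot))
  | p :: t, h => by
    have h1 : subj a p ∈ w := h p (by simp [Form.neg, Form.conj, Form.conjl])
    have h2 : subj a (conjl t) ∈ w :=
      mcs_subj_conjl hw a (fun ψ hψ => h ψ (List.mem_cons_of_mem _ hψ))
    have hd : Prov (imp (subj a p) (imp (subj a (conjl t))
        (subj a (conj p (conjl t))))) :=
      imp_trans (subj_mono a (prov_conj_intro_imp p (conjl t)))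
        (Prov.a5 a (conjl t) (conj p (conjl t)))
    exact mcs_closure2 hw hd h1 h2

/-! ### Lindenbaum -/

theorem exists_mem_chain {c : Set (Set (Form Ags))} (hc : IsChain (· ⊆ ·) c)
    (hne : c.Nonempty) :
    ∀ (l : List (Form Ags)), (∀ φ ∈ l, ∃ s ∈ c, φ ∈ s) →
      ∃ s ∈ c, ∀ φ ∈ l, φ ∈ s
  | [], _ => by obtain ⟨s, hs⟩ := hne; exact ⟨s, hs, by simp⟩
  | φ :: t, h => by
    obtain ⟨s, hsc, hst⟩ := exists_mem_chain hc hne t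
      (fun ψ hψ => h ψ (List.mem_cons_of_mem _ hψ))
    obtain ⟨u, huc, hφu⟩ := h φ (by simp [Form.neg, Form.conj, Form.conjl])
    rcases hc.total hsc huc with hsu | hus
    · refine ⟨u, huc, ?_⟩
      intro ψ hψ
      rcases List.mem_cons.mp hψ with h' | h'
      · subst h'; exact hφu
      · exact hsu (hst ψ h')
    · refine ⟨s, hsc, ?_⟩
      intro ψ hψ
      rcases List.mem_cons.mp hψ with h' | h'
      · subst h'; exact hus hφu
      · exact hst ψ h'

theorem not_consistent_of_both {M : Set (Form Ags)} {φ : Form Ags}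
    (h1 : ¬ Consistent (insert φ M)) (h2 : ¬ Consistent (insert (neg φ) M)) :
    ¬ Consistent M := by
  classical
  rw [Consistent, not_not] at h1 h2
  obtain ⟨l1, hl1, hp1⟩ := h1
  obtain ⟨l2, hl2, hp2⟩ := h2
  intro hM
  set m1 := l1.filter (fun ψ => decide (ψ ≠ φ)) with hm1
  set m2 := l2.filter (fun ψ => decide (ψ ≠ neg φ)) with hm2
  set L := m1 ++ m2 with hL
  refine hM ⟨L, ?_, ?_⟩
  · intro ψ hψ
    rcases List.mem_append.mp hψ with h | h
    · obtain ⟨hmem, hne⟩ := List.mem_filter.mp h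
      rcases hl1 ψ hmem with h' | h'
      · exact absurd h' (by simpa using hne)
      · exact h'
    · obtain ⟨hmem, hne⟩ := List.mem_filter.mp h
      rcases hl2 ψ hmem with h' | h'
      · exact absurd h' (by simpa using hne)
      · exact h'
  · refine prov_imp ?_
    have hc : Ded [conjl L] (conjl L) := .hyp (by simp [Form.neg, Form.conj, Form.conjl])
    have helems : ∀ ψ ∈ L, Ded [conjl L] ψ := ded_conjl_elim hc
    have hnφ : Ded [conjl L] (neg φ) := by
      refine Ded.imp_intro ?_
      have hall : ∀ ψ ∈ l1, Ded (φ :: [conjl L]) ψ := by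
        intro ψ hψ
        by_cases hc' : ψ = φ
        · subst hc'; exact .hyp (by simp [Form.neg, Form.conj, Form.conjl])
        · refine (helems ψ ?_).weak (fun χ h => List.mem_cons_of_mem _ h)
          exact List.mem_append.mpr (Or.inl (List.mem_filter.mpr
            ⟨hψ, by simpa using hc'⟩))
      exact .mp (.prov hp1) (ded_conjl_intro hall)
    have hall2 : ∀ ψ ∈ l2, Ded [conjl L] ψ := by
      intro ψ hψ
      by_cases hc' : ψ = neg φ
      · subst hc'; exact hnφ
      · exact helems ψ (List.mem_append.mpr (Or.inr (List.mem_filter.mpr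
          ⟨hψ, by simpa using hc'⟩)))
    exact .mp (.prov hp2) (ded_conjl_intro hall2)

theorem consistent_subset {Γ Δ : Set (Form Ags)} (h : Consistent Δ)
    (hsub : Γ ⊆ Δ) : Consistent Γ := by
  rintro ⟨l, hl, hp⟩
  exact h ⟨l, fun ψ hψ => hsub (hl ψ hψ), hp⟩

theorem lindenbaum {Γ : Set (Form Ags)} (h : Consistent Γ) :
    ∃ w, MCS w ∧ Γ ⊆ w := by
  have hub : ∀ c ⊆ {Δ : Set (Form Ags) | Consistent Δ},
      IsChain (· ⊆ ·) c → c.Nonempty →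
      ∃ ub ∈ {Δ : Set (Form Ags) | Consistent Δ}, ∀ s ∈ c, s ⊆ ub := by
    intro c hcS hchain hcne
    refine ⟨⋃₀ c, ?_, fun s hs => Set.subset_sUnion_of_mem hs⟩
    rintro ⟨l, hl, hp⟩
    obtain ⟨s, hsc, hall⟩ := exists_mem_chain hchain hcne l
      (fun ψ hψ => Set.mem_sUnion.mp (hl ψ hψ))
    exact hcS hsc ⟨l, hall, hp⟩
  obtain ⟨m, hΓm, hmax⟩ :=
    zorn_subset_nonempty {Δ : Set (Form Ags) | Consistent Δ} hub Γ h
  refine ⟨m, ⟨hmax.prop, fun φ => ?_⟩, hΓm⟩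
  by_cases h1 : Consistent (insert φ m)
  · left
    have := hmax.eq_of_subset h1 (Set.subset_insert _ _)
    rw [this]; exact Set.mem_insert _ _
  · by_cases h2 : Consistent (insert (neg φ) m)
    · right
      have := hmax.eq_of_subset h2 (Set.subset_insert _ _)
      rw [this]; exact Set.mem_insert _ _
    · exact absurd hmax.prop (not_consistent_of_both h1 h2)

end Form14

/-- Existence lemma for the subjective ought: `⊙_S[α]φ ∈ w` iff `K_αφ ∈ v` for
every MCS `v ∈ α_k[w]` with `Γ_α^v ⊆ v`. -/
theorem statement14 {Ags : Type} (a : Ags) (w : Set (Form Ags)) (hw : MCS w)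
    (φ : Form Ags) :
    Form.subj a φ ∈ w ↔
      ∀ v, MCS v → alphak a w v → GammaSet a v ⊆ v → Form.know a φ ∈ v := by
  open Form Form14 in
  constructor
  · intro hsubj v hv hak hγ
    have h1 : know a (box (subj a φ)) ∈ w :=
      mcs_closure hw (Prov.clAx a φ) hsubj
    exact hγ ⟨φ, rfl, hak _ h1⟩
  · intro h
    by_contra hns
    classical
    -- the seed set
    set Δ0 : Set (Form Ags) := {χ | know a (box χ) ∈ w} ∪ GammaSet a w with hΔ0
    have hsubj0 : ∀ δ ∈ Δ0, subj a δ ∈ w := by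
      rintro δ (hδ | ⟨χ, rfl, hχ⟩)
      · exact mcs_closure hw (Prov.sN a δ) hδ
      · exact mcs_closure hw (Prov.a6 a χ) hχ
    have hcons : Consistent (insert (neg (know a φ)) Δ0) := by
      rintro ⟨l, hl, hp⟩
      set c : Form Ags := neg (know a φ) with hc
      set l' := l.filter (fun ψ => decide (ψ ≠ c)) with hl'
      have hmem' : ∀ ψ ∈ l', ψ ∈ Δ0 := by
        intro ψ hψ
        obtain ⟨hmem, hne⟩ := List.mem_filter.mp hψ
        rcases hl ψ hmem with h' | h'
        · exact absurd h' (by simpa using hne)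
        · exact h'
      have hprov : Prov (imp (conjl l') (know a φ)) := by
        refine prov_imp (ded_byContra ?_)
        have helems : ∀ ψ ∈ l, Ded (c :: [conjl l']) ψ := by
          intro ψ hψ
          by_cases h' : ψ = c
          · subst h'; exact .hyp (by simp [Form.neg, Form.conj, Form.conjl])
          · refine ded_conjl_elim (Γ := c :: [conjl l'])
              (.hyp (φ := conjl l') (by simp)) ψ ?_
            exact List.mem_filter.mpr ⟨hψ, by simpa using h'⟩
        exact .mp (.prov hp) (ded_conjl_intro helems)
      have hsl : subj a (conjl l') ∈ w :=
        mcs_subj_conjl hw a (fun ψ hψ => hsubj0 ψ (hmem' ψ hψ))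
      have h1 : subj a (know a φ) ∈ w :=
        mcs_closure hw (subj_mono a hprov) hsl
      have h2 : subj a φ ∈ w :=
        mcs_closure hw (subj_mono a (Prov.knowT a φ)) h1
      exact hns h2
    obtain ⟨v, hv, hΔv⟩ := lindenbaum hcons
    have hak : alphak a w v := fun χ hχ =>
      hΔv (Set.mem_insert_of_mem _ (Or.inl hχ))
    have hγ : GammaSet a v ⊆ v := by
      rintro _ ⟨χ, rfl, hχ⟩
      have hsw : subj a χ ∈ w := by
        by_contra hns'
        have hnw : neg (subj a χ) ∈ w := (hw.2 _).resolve_left hns'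
        have h1 : know a (box (neg (subj a χ))) ∈ w :=
          mcs_closure hw (neg_subj_kbox a χ) hnw
        have h2 : neg (subj a χ) ∈ v :=
          hΔv (Set.mem_insert_of_mem _ (Or.inl h1))
        exact mcs_not_both hv hχ h2
      exact hΔv (Set.mem_insert_of_mem _ (Or.inr ⟨χ, rfl, hsw⟩))
    exact mcs_not_both hv (h v hv hak hγ) (hΔv (Set.mem_insert _ _))
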